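/- Let p ≥ 3 be an integer and λ ≥ 0. Let f : (0,∞) → ℝ be monotone non-increasing and such that for every integer m ≥ p, f is integrable with respect to χ²_m and the Poisson-mixture series Σ_{k≥0} e^{-λ/2}(λ/2)^k/k! · E_{χ²_{p+2k}}[|f|] and Σ_{k≥0} e^{-λ/2}(λ/2)^k/k! · E_{χ²_{p+2+2k}}[|f|] converge. Then E_{χ²_{p+2}(λ)}[f] ≤ E_{χ²_p(λ)}[f]. -/

import Mathlib

open MeasureTheory ProbabilityTheory

/-- The chi-square distribution with `m` degrees of freedom: the Gamma distribution
with shape `m/2` and rate `1/2`. -/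
noncomputable def chiSq (m : ℕ) : Measure ℝ := gammaMeasure ((m : ℝ) / 2) (1 / 2)

/-- Expectation of `f` under the chi-square distribution with `m` degrees of freedom. -/
noncomputable def chiSqExp (m : ℕ) (f : ℝ → ℝ) : ℝ := ∫ u, f u ∂(chiSq m)

/-- Expectation of `f` under the noncentral chi-square distribution with `p` degrees of
freedom and noncentrality parameter `lam`, as a Poisson mixture of central chi-squares. -/
noncomputable def ncChiSqExp (p : ℕ) (lam : ℝ) (f : ℝ → ℝ) : ℝ :=
  ∑' k : ℕ, (Real.exp (-(lam / 2)) * (lam / 2) ^ k / (Nat.factorial k)) * chiSqExp (p + 2 * k) f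


lemma myd_nonneg (m : ℕ) (hm : 1 ≤ m) (x : ℝ) : 0 ≤ gammaPDFReal ((m:ℝ)/2) (1/2) x :=
  gammaPDFReal_nonneg (by positivity) (by norm_num) x

lemma gammaPDF_eq_coe (a r : ℝ) :
    gammaPDF a r = fun x => ((Real.toNNReal (gammaPDFReal a r x)) : ENNReal) := rfl

lemma chiSqExp_eq (m : ℕ) (hm : 1 ≤ m) (f : ℝ → ℝ) :
    chiSqExp m f = ∫ x, gammaPDFReal ((m:ℝ)/2) (1/2) x * f x := by
  rw [chiSqExp, chiSq, gammaMeasure, gammaPDF_eq_coe,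
    integral_withDensity_eq_integral_smul
      ((measurable_gammaPDFReal _ _).real_toNNReal) f]
  refine integral_congr_ae (Filter.Eventually.of_forall fun x => ?_)
  simp only [NNReal.smul_def, smul_eq_mul, Real.coe_toNNReal _ (myd_nonneg m hm x)]

lemma integrable_mul_d (m : ℕ) (hm : 1 ≤ m) (f : ℝ → ℝ) (h : Integrable f (chiSq m)) :
    Integrable (fun x => gammaPDFReal ((m:ℝ)/2) (1/2) x * f x) volume := by
  rw [chiSq, gammaMeasure,
    show gammaPDF ((m:ℝ)/2) (1/2)
      = fun x => ENNReal.ofReal (gammaPDFReal ((m:ℝ)/2) (1/2) x) from rfl,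
    integrable_withDensity_iff
    ((measurable_gammaPDFReal _ _).ennreal_ofReal)
    (Filter.Eventually.of_forall fun x => ENNReal.ofReal_lt_top)] at h
  refine h.congr (Filter.Eventually.of_forall fun x => ?_)
  simp only [ENNReal.toReal_ofReal (myd_nonneg m hm x), mul_comm]

lemma integrable_d (m : ℕ) (hm : 1 ≤ m) :
    Integrable (fun x => gammaPDFReal ((m:ℝ)/2) (1/2) x) volume := by
  have h := integrable_toReal_of_lintegral_ne_top
    (μ := volume) (f := gammaPDF ((m:ℝ)/2) (1/2))
    ((measurable_gammaPDFReal _ _).ennreal_ofReal).aemeasurable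
    (by rw [lintegral_gammaPDF_eq_one (by positivity) (by norm_num)]; exact ENNReal.one_ne_top)
  refine h.congr (Filter.Eventually.of_forall fun x => ?_)
  simp only [gammaPDF, ENNReal.toReal_ofReal (myd_nonneg m hm x)]

lemma integral_d_eq_one (m : ℕ) (hm : 1 ≤ m) :
    ∫ x, gammaPDFReal ((m:ℝ)/2) (1/2) x = 1 := by
  rw [integral_eq_lintegral_of_nonneg_ae
    (Filter.Eventually.of_forall (myd_nonneg m hm))
    (measurable_gammaPDFReal _ _).aestronglyMeasurable]
  rw [show (fun x => ENNReal.ofReal (gammaPDFReal ((m:ℝ)/2) (1/2) x))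
      = gammaPDF ((m:ℝ)/2) (1/2) from rfl,
    lintegral_gammaPDF_eq_one (by positivity) (by norm_num)]
  simp

lemma d_zero {a r x : ℝ} (ha : a ≠ 1) (hx : x ≤ 0) : gammaPDFReal a r x = 0 := by
  unfold gammaPDFReal
  rcases lt_or_eq_of_le hx with h | h
  · rw [if_neg (not_le.mpr h)]
  · subst h
    rw [if_pos le_rfl, Real.zero_rpow (sub_ne_zero.mpr ha)]
    ring

lemma d_succ (m : ℕ) (hm : 1 ≤ m) {x : ℝ} (hx : 0 < x) :
    gammaPDFReal ((m:ℝ)/2 + 1) (1/2) x = (x / m) * gammaPDFReal ((m:ℝ)/2) (1/2) x := by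
  have hm' : (0:ℝ) < m := by exact_mod_cast hm
  have ha : (0:ℝ) < (m:ℝ)/2 := by positivity
  unfold gammaPDFReal
  rw [if_pos hx.le, if_pos hx.le]
  rw [Real.Gamma_add_one ha.ne']
  rw [show ((m:ℝ)/2 + 1 - 1) = ((m:ℝ)/2 - 1) + 1 by ring,
    Real.rpow_add_one hx.ne',
    Real.rpow_add_one (by norm_num : (1/2:ℝ) ≠ 0)]
  have hG : Real.Gamma ((m:ℝ)/2) ≠ 0 := (Real.Gamma_pos_of_pos ha).ne'
  field_simp

lemma chiSq_step (m : ℕ) (hm : 3 ≤ m) (f : ℝ → ℝ)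
    (hmono : AntitoneOn f (Set.Ioi (0 : ℝ)))
    (h1 : Integrable f (chiSq m)) (h2 : Integrable f (chiSq (m+2))) :
    chiSqExp (m+2) f ≤ chiSqExp m f := by
  have hm1 : 1 ≤ m := by omega
  have hm2 : 1 ≤ m + 2 := by omega
  have hm' : (0:ℝ) < m := by exact_mod_cast hm1
  set g : ℝ → ℝ := fun x => gammaPDFReal ((m:ℝ)/2) (1/2) x with hg
  set g' : ℝ → ℝ := fun x => gammaPDFReal (((m+2:ℕ):ℝ)/2) (1/2) x with hg'
  have hcast : ((m+2:ℕ):ℝ)/2 = (m:ℝ)/2 + 1 := by push_cast; ring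
  set c : ℝ := f (m:ℝ) with hc
  -- pointwise nonnegativity of H
  set H : ℝ → ℝ := fun x => (f x - c) * (g x - g' x) with hH
  have hne1 : ((m:ℝ)/2) ≠ 1 := by
    intro h
    have : (m:ℝ) = 2 := by linarith
    have : m = 2 := by exact_mod_cast this
    omega
  have hne2 : (((m+2:ℕ)):ℝ)/2 ≠ 1 := by
    rw [hcast]; intro h; have : (m:ℝ) = 0 := by linarith
    exact hm'.ne' this
  have hHnn : ∀ x, 0 ≤ H x := by
    intro x
    rcases le_or_gt x 0 with hx | hx
    · have e1 : g x = 0 := d_zero hne1 hx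
      have e2 : g' x = 0 := d_zero hne2 hx
      show 0 ≤ (f x - c) * (g x - g' x)
      rw [e1, e2]; norm_num
    · have hrel : g x - g' x = g x * (1 - x / m) := by
        simp only [hg, hg', hcast, d_succ m hm1 hx]; ring
      show 0 ≤ (f x - c) * (g x - g' x)
      rw [hrel]
      rcases le_total x (m:ℝ) with hxm | hxm
      · have hf : c ≤ f x := hmono (Set.mem_Ioi.mpr hx) (Set.mem_Ioi.mpr hm') hxm
        have : 0 ≤ 1 - x / m := by
          rw [sub_nonneg, div_le_one hm']; exact hxm
        exact mul_nonneg (by linarith) (mul_nonneg (myd_nonneg m hm1 x) this)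
      · have hf : f x ≤ c := hmono (Set.mem_Ioi.mpr hm') (Set.mem_Ioi.mpr hx) hxm
        have h1x : 1 - x / m ≤ 0 := by
          rw [sub_nonpos, le_div_iff₀ hm', one_mul]; exact hxm
        have h0 : 0 ≤ (c - f x) * (g x * (x / ↑m - 1)) :=
          mul_nonneg (by linarith) (mul_nonneg (myd_nonneg m hm1 x) (by linarith))
        nlinarith [h0]
  -- integrability pieces
  have Ig : Integrable (fun x => g x * f x) volume := integrable_mul_d m hm1 f h1
  have Ig' : Integrable (fun x => g' x * f x) volume := integrable_mul_d (m+2) hm2 f h2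
  have Id : Integrable g volume := integrable_d m hm1
  have Id' : Integrable g' volume := integrable_d (m+2) hm2
  have hHeq : H = fun x => (g x * f x - g' x * f x) - (c * g x - c * g' x) := by
    funext x; rw [hH]; ring
  have Ic : Integrable (fun x => c * g x) volume := Id.const_mul c
  have Ic' : Integrable (fun x => c * g' x) volume := Id'.const_mul c
  have Isub1 : Integrable (fun x => g x * f x - g' x * f x) volume := Ig.sub Ig'
  have Isub2 : Integrable (fun x => c * g x - c * g' x) volume := Ic.sub Ic'
  have hInt : ∫ x, H x =
      ((∫ x, g x * f x) - ∫ x, g' x * f x) - (c * (∫ x, g x) - c * (∫ x, g' x)) := by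
    simp only [hHeq]
    rw [integral_sub Isub1 Isub2, integral_sub Ig Ig', integral_sub Ic Ic',
      integral_const_mul, integral_const_mul]
  have hone : ∫ x, g x = 1 := integral_d_eq_one m hm1
  have hone' : ∫ x, g' x = 1 := integral_d_eq_one (m+2) hm2
  have hHpos : 0 ≤ ∫ x, H x := integral_nonneg hHnn
  rw [hone, hone'] at hInt
  rw [chiSqExp_eq m hm1 f, chiSqExp_eq (m+2) hm2 f]
  have : (∫ x, g' x * f x) ≤ ∫ x, g x * f x := by
    rw [hInt] at hHpos; linarith
  exact this

lemma abs_chiSqExp_le (m : ℕ) (f : ℝ → ℝ) :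
    |chiSqExp m f| ≤ chiSqExp m (fun u => |f u|) := by
  simpa [chiSqExp, Real.norm_eq_abs] using
    norm_integral_le_integral_norm (μ := chiSq m) f

theorem stmt_0 (p : ℕ) (hp : 3 ≤ p) (lam : ℝ) (hlam : 0 ≤ lam) (f : ℝ → ℝ)
    (hmono : AntitoneOn f (Set.Ioi (0 : ℝ)))
    (hint : ∀ m : ℕ, p ≤ m → Integrable f (chiSq m))
    (hsum1 : Summable (fun k : ℕ =>
      (Real.exp (-(lam / 2)) * (lam / 2) ^ k / (Nat.factorial k)) *
        chiSqExp (p + 2 * k) (fun u => |f u|)))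
    (hsum2 : Summable (fun k : ℕ =>
      (Real.exp (-(lam / 2)) * (lam / 2) ^ k / (Nat.factorial k)) *
        chiSqExp (p + 2 + 2 * k) (fun u => |f u|))) :
    ncChiSqExp (p + 2) lam f ≤ ncChiSqExp p lam f := by
  set coef : ℕ → ℝ := fun k => Real.exp (-(lam / 2)) * (lam / 2) ^ k / (Nat.factorial k)
    with hcoef
  have hcnn : ∀ k, 0 ≤ coef k := fun k => by
    rw [hcoef]
    have := Real.exp_pos (-(lam / 2))
    positivity
  have hterm : ∀ k, coef k * chiSqExp (p + 2 + 2 * k) f ≤ coef k * chiSqExp (p + 2 * k) f := by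
    intro k
    refine mul_le_mul_of_nonneg_left ?_ (hcnn k)
    have h := chiSq_step (p + 2 * k) (by omega) f hmono
      (hint _ (by omega)) (hint _ (by omega))
    have he : p + 2 * k + 2 = p + 2 + 2 * k := by omega
    rwa [he] at h
  have hs1 : Summable (fun k => coef k * chiSqExp (p + 2 * k) f) := by
    refine Summable.of_abs (hsum1.of_nonneg_of_le (fun k => abs_nonneg _) fun k => ?_)
    rw [abs_mul, abs_of_nonneg (hcnn k)]
    exact mul_le_mul_of_nonneg_left (abs_chiSqExp_le _ f) (hcnn k)
  have hs2 : Summable (fun k => coef k * chiSqExp (p + 2 + 2 * k) f) := by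
    refine Summable.of_abs (hsum2.of_nonneg_of_le (fun k => abs_nonneg _) fun k => ?_)
    rw [abs_mul, abs_of_nonneg (hcnn k)]
    exact mul_le_mul_of_nonneg_left (abs_chiSqExp_le _ f) (hcnn k)
  exact Summable.tsum_le_tsum hterm hs2 hs1
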